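/- Let G_n over F_q be defined recursively by G_1 = [1] and G_n = [[G_{n/2}, 0],[β_r G_{n/2}, G_{n/2}]] for n = 2^r, with nonzero multipliers β_j ∈ F_q^*. If u = (u_1,…,u_n) ∈ F_q^n satisfies u_1 = … = u_{i−1} = 0 and u_i ≠ 0, then the Hamming weight of the codeword c = u G_n satisfies d(c) ≥ 2^{wt(i−1)}, where wt(i−1) is the number of ones in the binary expansion of i−1. -/

import Mathlib

/-- The 2×2 polarization kernel `[[1,0],[β,1]]` over a field. -/
def kern {F : Type} [Field F] (β : F) : Matrix (Fin 2) (Fin 2) F := !![1, 0; β, 1]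

/-- The recursively-defined polar transform matrix `G_{2^r}` over `F_q`:
`G_1 = [1]` and `G_{2^{r+1}} = [[G_{2^r}, 0], [β_{r+1} G_{2^r}, G_{2^r}]]`. -/
def polarG {F : Type} [Field F] (β : ℕ → F) : (r : ℕ) → Matrix (Fin (2 ^ r)) (Fin (2 ^ r)) F
  | 0 => 1
  | r + 1 => Matrix.of fun i j =>
      kern (β (r + 1))
          ⟨i.val / 2 ^ r, by
            exact Nat.div_lt_of_lt_mul (by rw [← pow_succ]; exact i.isLt)⟩
          ⟨j.val / 2 ^ r, by
            exact Nat.div_lt_of_lt_mul (by rw [← pow_succ]; exact j.isLt)⟩ *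
        polarG β r ⟨i.val % 2 ^ r, Nat.mod_lt _ (pow_pos (by norm_num) r)⟩
          ⟨j.val % 2 ^ r, Nat.mod_lt _ (pow_pos (by norm_num) r)⟩
/-- Number of ones in the binary expansion of `k`. -/
def wt (k : ℕ) : ℕ := (Nat.digits 2 k).sum

/-! ### Auxiliary lemmas -/

lemma wt_div2 (m : ℕ) : wt m = m % 2 + wt (m / 2) := by
  rcases Nat.eq_zero_or_pos m with h | h
  · simp [h, wt]
  · rw [wt, Nat.digits_def' (by norm_num) h]
    simp [wt, Nat.add_comm]

lemma wt_pow_add (r : ℕ) : ∀ m, m < 2 ^ r → wt (2 ^ r + m) = wt m + 1 := by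
  induction r with
  | zero =>
    intro m hm
    interval_cases m
    simp [wt]
  | succ r ih =>
    intro m hm
    have hp : 2 ^ (r + 1) = 2 ^ r * 2 := by rw [pow_succ]
    have h2 : (2 ^ (r + 1) + m) % 2 = m % 2 := by omega
    have h3 : (2 ^ (r + 1) + m) / 2 = 2 ^ r + m / 2 := by omega
    have h4 : m / 2 < 2 ^ r := by omega
    rw [wt_div2 (2 ^ (r + 1) + m), h2, h3, ih _ h4, wt_div2 m]
    ring

/-- Splitting `Fin (2^(r+1))` into two halves. -/
def sumEquiv (r : ℕ) : Fin (2 ^ r) ⊕ Fin (2 ^ r) ≃ Fin (2 ^ (r + 1)) :=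
  finSumFinEquiv.trans (finCongr (by rw [pow_succ]; ring))

@[simp] lemma sumEquiv_inl (r : ℕ) (k : Fin (2 ^ r)) :
    ((sumEquiv r (Sum.inl k)) : ℕ) = k.val := rfl

@[simp] lemma sumEquiv_inr (r : ℕ) (k : Fin (2 ^ r)) :
    ((sumEquiv r (Sum.inr k)) : ℕ) = 2 ^ r + k.val := rfl

section
variable {F : Type} [Field F]

lemma div_lem (r : ℕ) (i : Fin (2 ^ r)) : (2 ^ r + i.val) / 2 ^ r = 1 := by
  have h := i.isLt
  have hp : 0 < 2 ^ r := Nat.pow_pos (by norm_num)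
  rw [Nat.add_div_left _ hp, Nat.div_eq_of_lt h]

lemma polarG_succ_apply (β : ℕ → F) (r : ℕ) (x y : Sum (Fin (2 ^ r)) (Fin (2 ^ r))) :
    polarG β (r + 1) (sumEquiv r x) (sumEquiv r y) =
      (match x, y with
        | Sum.inl i, Sum.inl j => polarG β r i j
        | Sum.inl _, Sum.inr _ => 0
        | Sum.inr i, Sum.inl j => β (r + 1) * polarG β r i j
        | Sum.inr i, Sum.inr j => polarG β r i j) := by
  have hp : 0 < 2 ^ r := Nat.pow_pos (by norm_num)
  rcases x with i | i <;> rcases y with j | j <;>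
    · simp only [polarG, Matrix.of_apply]
      simp only [sumEquiv_inl, sumEquiv_inr, Nat.div_eq_of_lt (Fin.is_lt _),
        Nat.mod_eq_of_lt (Fin.is_lt _), div_lem, Nat.add_mod_left,
        Nat.mod_eq_of_lt (Fin.is_lt _)]
      simp [kern, Fin.mk_zero, Fin.mk_one]

open Classical in
/-- Hamming weight of a vector. -/
noncomputable def wtv {n : ℕ} (v : Fin n → F) : ℕ :=
  (Finset.univ.filter fun j => v j ≠ 0).card

open Classical in
lemma wtv_eq_sum {n : ℕ} (v : Fin n → F) :
    wtv v = ∑ j : Fin n, if v j ≠ 0 then 1 else 0 := by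
  rw [wtv, Finset.card_filter]

lemma wtv_split (r : ℕ) (c : Fin (2 ^ (r + 1)) → F) :
    wtv c = wtv (fun k => c (sumEquiv r (Sum.inl k))) +
      wtv (fun k => c (sumEquiv r (Sum.inr k))) := by
  classical
  rw [wtv_eq_sum, wtv_eq_sum, wtv_eq_sum,
    ← Fintype.sum_equiv (sumEquiv r) (fun x => if c (sumEquiv r x) ≠ 0 then 1 else 0)
      (fun j => if c j ≠ 0 then 1 else 0) (fun x => rfl),
    Fintype.sum_sum_type]

open Classical in
lemma wtv_sub_le {n : ℕ} (a b : Fin n → F) (β : F) :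
    wtv (fun j => a j - β * b j) ≤ wtv a + wtv b := by
  refine le_trans (Finset.card_le_card ?_) (Finset.card_union_le _ _)
  intro j hj
  simp only [Finset.mem_filter, Finset.mem_univ, true_and, Finset.mem_union] at hj ⊢
  by_contra h
  push_neg at h
  obtain ⟨h1, h2⟩ := h
  simp [h1, h2] at hj

lemma wtv_smul {n : ℕ} (v : Fin n → F) (β : F) (hβ : β ≠ 0) :
    wtv (fun j => β * v j) = wtv v := by
  classical
  unfold wtv
  congr 1
  apply Finset.filter_congr
  intro j _
  simp [hβ]

lemma vecMul_fst (β : ℕ → F) (r : ℕ) (u : Fin (2 ^ (r + 1)) → F) (j : Fin (2 ^ r)) :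
    Matrix.vecMul u (polarG β (r + 1)) (sumEquiv r (Sum.inl j)) =
      Matrix.vecMul (fun k => u (sumEquiv r (Sum.inl k)) +
        β (r + 1) * u (sumEquiv r (Sum.inr k))) (polarG β r) j := by
  simp only [Matrix.vecMul, dotProduct]
  rw [← Fintype.sum_equiv (sumEquiv r)
      (fun x => u (sumEquiv r x) * polarG β (r + 1) (sumEquiv r x) (sumEquiv r (Sum.inl j)))
      (fun i => u i * polarG β (r + 1) i (sumEquiv r (Sum.inl j))) (fun x => rfl),
    Fintype.sum_sum_type]
  simp only [polarG_succ_apply]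
  rw [← Finset.sum_add_distrib]
  apply Finset.sum_congr rfl
  intro k _
  ring

lemma vecMul_snd (β : ℕ → F) (r : ℕ) (u : Fin (2 ^ (r + 1)) → F) (j : Fin (2 ^ r)) :
    Matrix.vecMul u (polarG β (r + 1)) (sumEquiv r (Sum.inr j)) =
      Matrix.vecMul (fun k => u (sumEquiv r (Sum.inr k))) (polarG β r) j := by
  simp only [Matrix.vecMul, dotProduct]
  rw [← Fintype.sum_equiv (sumEquiv r)
      (fun x => u (sumEquiv r x) * polarG β (r + 1) (sumEquiv r x) (sumEquiv r (Sum.inr j)))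
      (fun i => u i * polarG β (r + 1) i (sumEquiv r (Sum.inr j))) (fun x => rfl),
    Fintype.sum_sum_type]
  simp only [polarG_succ_apply]
  simp

lemma vecMul_sub (β : F) (r : ℕ) (M : Matrix (Fin r) (Fin r) F) (v w : Fin r → F)
    (j : Fin r) :
    Matrix.vecMul v M j - β * Matrix.vecMul w M j =
      Matrix.vecMul (fun k => v k - β * w k) M j := by
  simp only [Matrix.vecMul, dotProduct, Finset.mul_sum, ← Finset.sum_sub_distrib]
  apply Finset.sum_congr rfl
  intro k _
  ring

/-- Key induction. -/
lemma stmt3_aux (β : ℕ → F) (hβ : ∀ j, β j ≠ 0) (r : ℕ)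
    (u : Fin (2 ^ r) → F) (i : Fin (2 ^ r))
    (h0 : ∀ j : Fin (2 ^ r), j < i → u j = 0) (hi : u i ≠ 0) :
    2 ^ wt (i : ℕ) ≤ wtv (Matrix.vecMul u (polarG β r)) := by
  classical
  induction r with
  | zero =>
    have hi0 : (i : ℕ) = 0 := by omega
    have : Matrix.vecMul u (polarG β 0) = u := by
      show Matrix.vecMul u 1 = u
      simp [Matrix.vecMul_one]
    rw [hi0]
    simp only [wt]
    simp only [Nat.digits_zero, List.sum_nil, pow_zero]
    rw [this, wtv]
    exact Finset.card_pos.mpr ⟨i, by simp only [Finset.mem_filter, Finset.mem_univ, true_and]; exact hi⟩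
  | succ r ih =>
    set e := sumEquiv r with he
    set c := Matrix.vecMul u (polarG β (r + 1)) with hc
    set u₀ : Fin (2 ^ r) → F := fun k => u (e (Sum.inl k)) with hu₀
    set u₁ : Fin (2 ^ r) → F := fun k => u (e (Sum.inr k)) with hu₁
    have hsplit : wtv c = wtv (Matrix.vecMul (fun k => u₀ k + β (r + 1) * u₁ k) (polarG β r)) +
        wtv (Matrix.vecMul u₁ (polarG β r)) := by
      rw [wtv_split r c]
      congr 1
      · apply congrArg
        funext k
        exact vecMul_fst β r u k
      · apply congrArg
        funext k
        exact vecMul_snd β r u k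
    by_cases hcase : (i : ℕ) < 2 ^ r
    · -- leading index in the first half
      set i' : Fin (2 ^ r) := ⟨(i : ℕ), hcase⟩ with hi'
      have hei' : e (Sum.inl i') = i := by
        apply Fin.ext
        simp [he]
        rfl
      have h0' : ∀ j : Fin (2 ^ r), j < i' → u₀ j = 0 := by
        intro j hj
        apply h0
        rw [Fin.lt_def] at hj ⊢
        exact hj
      have hi'' : u₀ i' ≠ 0 := by
        show u (e (Sum.inl i')) ≠ 0
        rw [hei']
        exact hi
      have key := ih u₀ i' h0' hi''
      have hrw : Matrix.vecMul u₀ (polarG β r) =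
          fun j => Matrix.vecMul (fun k => u₀ k + β (r + 1) * u₁ k) (polarG β r) j -
            β (r + 1) * Matrix.vecMul u₁ (polarG β r) j := by
        funext j
        rw [vecMul_sub]
        have : (fun k => u₀ k + β (r + 1) * u₁ k - β (r + 1) * u₁ k) = u₀ := by
          funext k; ring
        rw [this]
      rw [hrw] at key
      have hub := wtv_sub_le (Matrix.vecMul (fun k => u₀ k + β (r + 1) * u₁ k) (polarG β r))
        (Matrix.vecMul u₁ (polarG β r)) (β (r + 1))
      have key' : 2 ^ wt (i : ℕ) ≤
          wtv (fun j => Matrix.vecMul (fun k => u₀ k + β (r + 1) * u₁ k) (polarG β r) j -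
            β (r + 1) * Matrix.vecMul u₁ (polarG β r) j) := key
      omega
    · -- leading index in the second half
      push_neg at hcase
      have hm : (i : ℕ) - 2 ^ r < 2 ^ r := by
        have := i.isLt
        have hp : 2 ^ (r + 1) = 2 ^ r * 2 := by rw [pow_succ]
        omega
      set i' : Fin (2 ^ r) := ⟨(i : ℕ) - 2 ^ r, hm⟩ with hi'
      have hei' : e (Sum.inr i') = i := by
        apply Fin.ext
        show 2 ^ r + ((i : ℕ) - 2 ^ r) = (i : ℕ)
        omega
      have h0' : ∀ j : Fin (2 ^ r), j < i' → u₁ j = 0 := by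
        intro j hj
        apply h0
        rw [Fin.lt_def] at hj ⊢
        show 2 ^ r + (j : ℕ) < (i : ℕ)
        simp only [hi'] at hj
        omega
      have hi'' : u₁ i' ≠ 0 := by
        show u (e (Sum.inr i')) ≠ 0
        rw [hei']
        exact hi
      have key := ih u₁ i' h0' hi''
      have hz : ∀ k, u₀ k = 0 := by
        intro k
        apply h0
        rw [Fin.lt_def]
        show (k : ℕ) < (i : ℕ)
        have := k.isLt
        omega
      have hfst : (fun k => u₀ k + β (r + 1) * u₁ k) = fun k => β (r + 1) * u₁ k := by
        funext k
        rw [hz k, zero_add]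
      have hsc : Matrix.vecMul (fun k => β (r + 1) * u₁ k) (polarG β r) =
          fun j => β (r + 1) * Matrix.vecMul u₁ (polarG β r) j := by
        funext j
        simp only [Matrix.vecMul, dotProduct, Finset.mul_sum]
        apply Finset.sum_congr rfl
        intro k _
        ring
      rw [hfst, hsc, wtv_smul _ _ (hβ (r + 1))] at hsplit
      have hwt : wt (i : ℕ) = wt ((i' : ℕ)) + 1 := by
        have : (i : ℕ) = 2 ^ r + ((i : ℕ) - 2 ^ r) := by omega
        rw [this, wt_pow_add r _ hm]
      rw [hwt, pow_succ]
      omega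

open Classical in
/-- If `u ∈ F_q^n` has `u_j = 0` for all `j < i` and `u_i ≠ 0`, then the
Hamming weight of the codeword `c = u Gₙ` is at least `2 ^ wt(i)` (zero-based index `i`). -/
theorem stmt3 {F : Type} [Field F] (β : ℕ → F) (hβ : ∀ j, β j ≠ 0) (r : ℕ)
    (u : Fin (2 ^ r) → F) (i : Fin (2 ^ r))
    (h0 : ∀ j : Fin (2 ^ r), j < i → u j = 0) (hi : u i ≠ 0) :
    2 ^ wt (i : ℕ) ≤
      (Finset.univ.filter fun j : Fin (2 ^ r) => Matrix.vecMul u (polarG β r) j ≠ 0).card := by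
  have h := stmt3_aux β hβ r u i h0 hi
  rw [wtv] at h
  convert h using 2
end
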